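/- If n is even, no anonymous random voting rule φ̄ : {-1,1}^n → [-1,1] is robust: there exists a probability distribution p (uniform on profiles with exactly n/2 ones) under which E_p[φ̄(x)·xᵢ] = 0 for every individual i. -/

import Mathlib

open Finset

/-- The real value of a ±1 vote encoded as a `Bool` (`true ↦ 1`, `false ↦ -1`). -/
def sg (b : Bool) : ℝ := if b then 1 else -1

/-- Responsiveness of individual `i` under rule `φ` and distribution `p`. -/
def resp {n : ℕ} (φ : (Fin n → Bool) → Bool) (p : (Fin n → Bool) → ℝ) (i : Fin n) : ℝ :=
  ∑ x : Fin n → Bool, if φ x = x i then p x else 0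

/-- `p` is a probability distribution on profiles. -/
def IsProb {n : ℕ} (p : (Fin n → Bool) → ℝ) : Prop :=
  (∀ x, 0 ≤ p x) ∧ ∑ x : Fin n → Bool, p x = 1

/-- The uniform distribution on profiles with exactly `n/2` ones. -/
noncomputable def unifHalf (n : ℕ) : (Fin n → Bool) → ℝ := fun x =>
  if (Finset.univ.filter (fun i => x i = true)).card = n / 2 then
    ((n.choose (n / 2) : ℝ))⁻¹ else 0

/-- aux -/
lemma exists_perm_aux {n : ℕ} (x y : Fin n → Bool)
    (h : #(univ.filter (fun i => y i = true)) = #(univ.filter (fun i => x i = true))) :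
    ∃ π : Equiv.Perm (Fin n), ∀ i, y i = x (π i) := by
  have h1 : Fintype.card {i // y i = true} = Fintype.card {i // x i = true} := by
    simpa [Fintype.card_subtype] using h
  have h2 : Fintype.card {i // ¬(y i = true)} = Fintype.card {i // ¬(x i = true)} := by
    rw [Fintype.card_subtype_compl, Fintype.card_subtype_compl, h1]
  refine ⟨Equiv.subtypeCongr (Fintype.equivOfCardEq h1) (Fintype.equivOfCardEq h2), fun i => ?_⟩
  by_cases hy : y i = true
  · have he : Equiv.subtypeCongr (Fintype.equivOfCardEq h1) (Fintype.equivOfCardEq h2) i =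
        ((Fintype.equivOfCardEq h1) ⟨i, hy⟩ : Fin n) := by
      simp [Equiv.subtypeCongr, hy]
    rw [he, hy, ((Fintype.equivOfCardEq h1) ⟨i, hy⟩).2]
  · have he : Equiv.subtypeCongr (Fintype.equivOfCardEq h1) (Fintype.equivOfCardEq h2) i =
        ((Fintype.equivOfCardEq h2) ⟨i, hy⟩ : Fin n) := by
      simp [Equiv.subtypeCongr, hy]
    rw [he]
    have h3 := ((Fintype.equivOfCardEq h2) ⟨i, hy⟩).2
    simp only [Bool.not_eq_true] at hy h3 ⊢
    rw [hy, h3]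


/-- if `n` is even, no anonymous random voting rule is robust: under the
uniform distribution on profiles with exactly `n/2` ones, every individual's
`E_p[φ̄(x)xᵢ]` is zero. -/
theorem stmt_17 (n : ℕ) (hn : Even n) (φb : (Fin n → Bool) → ℝ)
    (hb : ∀ x, φb x ∈ Set.Icc (-1 : ℝ) 1)
    (hanon : ∀ (x : Fin n → Bool) (π : Equiv.Perm (Fin n)), φb (fun i => x (π i)) = φb x) :
    IsProb (unifHalf n) ∧
    (∀ i, (∑ x : Fin n → Bool, unifHalf n x * (φb x * sg (x i))) = 0) ∧
    ¬(∀ p, IsProb p → ∃ i, 0 < ∑ x : Fin n → Bool, p x * (φb x * sg (x i))) := by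
  classical
  obtain ⟨m, hm⟩ := hn
  set P : (Fin n → Bool) → Prop := fun x => #(univ.filter (fun i => x i = true)) = n / 2 with hP
  have hconst : ∀ x y, P x → P y → φb y = φb x := by
    intro x y hx hy
    obtain ⟨π, hπ⟩ := exists_perm_aux x y (by rw [hx, hy])
    have h := hanon x π
    rwa [show (fun i => x (π i)) = y from funext fun i => (hπ i).symm] at h
  have hneg : ∀ x : Fin n → Bool, P x → P (fun i => !x i) := by
    intro x hx
    have he : (univ.filter (fun i => (!x i) = true))
        = univ \ (univ.filter (fun i => x i = true)) := by
      ext i; simp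
    simp only [hP] at hx ⊢
    rw [he, card_sdiff_of_subset (filter_subset _ _), hx, card_univ, Fintype.card_fin]
    omega
  have hcard : #(univ.filter P) = n.choose (n / 2) := by
    have : #(univ.filter P) = #(powersetCard (n/2) (univ : Finset (Fin n))) := by
      refine card_nbij' (fun x => univ.filter (fun i => x i = true))
        (fun s => fun i => decide (i ∈ s)) ?_ ?_ ?_ ?_
      · intro x hx
        simp only [mem_coe, mem_filter, mem_univ, true_and] at hx
        simp [mem_powersetCard, hx]
        exact hx
      · intro s hs
        simp only [mem_coe, mem_powersetCard] at hs
        simp only [mem_coe, mem_filter, mem_univ, true_and, hP]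
        rw [show (univ.filter fun i => decide (i ∈ s) = true) = s by ext i; simp, hs.2]
      · intro x hx
        funext i; by_cases h : x i = true <;> simp [h]
      · intro s hs
        ext i; simp
    rw [this, Finset.card_powersetCard, card_univ, Fintype.card_fin]
  have hch : (0:ℝ) < (n.choose (n/2) : ℝ) := by
    exact_mod_cast Nat.choose_pos (Nat.div_le_self n 2)
  have hprob : IsProb (unifHalf n) := by
    constructor
    · intro x
      unfold unifHalf
      split
      · positivity
      · exact le_rfl
    · have : ∑ x : Fin n → Bool, unifHalf n x
          = ∑ x ∈ univ.filter P, ((n.choose (n / 2) : ℝ))⁻¹ := by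
        rw [sum_filter]; apply sum_congr rfl; intro x _
        unfold unifHalf; by_cases h : P x <;> simp [hP] at h ⊢ <;> simp [h]
      rw [this, sum_const, hcard, nsmul_eq_mul]
      field_simp
  have hzero : ∀ i, (∑ x : Fin n → Bool, unifHalf n x * (φb x * sg (x i))) = 0 := by
    intro i
    set g : (Fin n → Bool) → ℝ := fun x => φb x * sg (x i) with hg
    have hsum : ∑ x : Fin n → Bool, unifHalf n x * g x
        = ∑ x ∈ univ.filter P, ((n.choose (n / 2) : ℝ))⁻¹ * g x := by
      rw [sum_filter]; apply sum_congr rfl; intro x _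
      unfold unifHalf; by_cases h : P x <;> simp [hP] at h ⊢ <;> simp [h]
    have hre : ∑ x ∈ univ.filter P, ((n.choose (n / 2) : ℝ))⁻¹ * g x
        = ∑ x ∈ univ.filter P, ((n.choose (n / 2) : ℝ))⁻¹ * g (fun j => !x j) := by
      refine sum_nbij' (fun x => fun j => !x j) (fun x => fun j => !x j) ?_ ?_ ?_ ?_ ?_
      · intro x hx; simp only [mem_filter, mem_univ, true_and] at hx ⊢; exact hneg x hx
      · intro x hx; simp only [mem_filter, mem_univ, true_and] at hx ⊢; exact hneg x hx
      · intro x _; funext j; simp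
      · intro x _; funext j; simp
      · intro x _; simp
    have hflip : ∀ x ∈ univ.filter P, g (fun j => !x j) = -g x := by
      intro x hx
      simp only [mem_filter, mem_univ, true_and] at hx
      have h1 : φb (fun j => !x j) = φb x := hconst x _ hx (hneg x hx)
      have h2 : sg (!x i) = -sg (x i) := by cases x i <;> simp [sg]
      simp [hg, h1, h2]
    have : ∑ x : Fin n → Bool, unifHalf n x * g x
        = -∑ x : Fin n → Bool, unifHalf n x * g x := by
      conv_lhs => rw [hsum, hre]
      rw [hsum, ← sum_neg_distrib]
      apply sum_congr rfl
      intro x hx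
      rw [hflip x hx]; ring
    linarith
  refine ⟨hprob, hzero, fun h => ?_⟩
  obtain ⟨i, hi⟩ := h (unifHalf n) hprob
  rw [hzero i] at hi
  exact lt_irrefl 0 hi
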